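/- arXiv:math/0604634 — 2 statements merged into one kernel-verified Lean document; each statement's English description precedes it below -/
import Mathlib

section
/- Let P_β be the Gibbs measure on {-1,1}^N with H(τ) = (1/2)τᵗJτ, J symmetric with zero diagonal, J ≠ 0, and ‖J‖ ≤ 1. Then for any β > 0, P_β(N^{-1}H(σ) ≤ ψ(β)/(4β)) ≤ 8β²/(Nψ(β)³). -/
noncomputable section

/-- The spin value of a boolean configuration entry: `true ↦ 1`, `false ↦ -1`. -/
def spin (b : Bool) : ℝ := if b then 1 else -1

/-- The Hamiltonian `H(τ) = (1/2) τᵗ J τ = (1/2) ∑_{i,j} J_{ij} τᵢ τⱼ`. -/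
def Ham {N : ℕ} (J : Matrix (Fin N) (Fin N) ℝ) (τ : Fin N → Bool) : ℝ :=
  (1 / 2) * ∑ i, ∑ j, J i j * spin (τ i) * spin (τ j)

/-- The log-partition function `ψ(β) = N⁻¹ log(2^{-N} ∑_τ exp(β H(τ)))`. -/
def logPart {N : ℕ} (J : Matrix (Fin N) (Fin N) ℝ) (β : ℝ) : ℝ :=
  (N : ℝ)⁻¹ * Real.log ((2 : ℝ) ^ (-(N : ℤ)) * ∑ τ : Fin N → Bool, Real.exp (β * Ham J τ))

/-- The Gibbs probability `P_β({τ}) = 2^{-N} exp(β H(τ) − N ψ(β))`. -/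
def gibbs {N : ℕ} (J : Matrix (Fin N) (Fin N) ℝ) (β : ℝ) (τ : Fin N → Bool) : ℝ :=
  (2 : ℝ) ^ (-(N : ℤ)) * Real.exp (β * Ham J τ - N * logPart J β)

lemma spin_ne_zero (b : Bool) : spin b ≠ 0 := by cases b <;> norm_num [spin]
lemma spin_not (b : Bool) : spin (!b) = -spin b := by cases b <;> norm_num [spin]

lemma quad_update {N : ℕ} (J : Matrix (Fin N) (Fin N) ℝ) (hsym : J.IsSymm)
    (hdiag : ∀ i, J i i = 0) (s : Fin N → ℝ) (i : Fin N) :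
    ∑ k, ∑ l, J k l * (if k = i then -s i else s k) * (if l = i then -s i else s l)
      = (∑ k, ∑ l, J k l * s k * s l) - 4 * s i * ∑ l, J i l * s l := by
  classical
  have hsym' : ∀ k l, J k l = J l k := fun k l => by
    conv_lhs => rw [← hsym]
    rfl
  have expand : ∀ k l : Fin N,
      J k l * (if k = i then -s i else s k) * (if l = i then -s i else s l)
      = J k l * s k * s l
        + (if k = i then -2 * s i * (J k l * s l) else 0)
        + (if l = i then -2 * s i * (J k l * s k) else 0)
        + (if k = i then (if l = i then 4 * (s i * s i) * J k l else 0) else 0) := by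
    intro k l
    by_cases hk : k = i <;> by_cases hl : l = i <;> simp [hk, hl] <;> ring
  simp_rw [expand]
  simp only [Finset.sum_add_distrib, Finset.sum_ite_irrel, Finset.sum_const_zero,
    Finset.sum_ite_eq', Finset.mem_univ, if_true]
  have hrow : ∑ k : Fin N, -2 * s i * (J k i * s k) = ∑ l : Fin N, -2 * s i * (J i l * s l) :=
    Finset.sum_congr rfl fun k _ => by rw [hsym' k i]
  rw [hrow, hdiag i]
  rw [show ∀ a b c : ℝ, a + b + b + c = a + 2*b + c from fun a b c => by ring]
  have hfin : (2:ℝ) * ∑ x : Fin N, -2 * s i * (J i x * s x)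
      = -4 * s i * ∑ l : Fin N, J i l * s l := by
    rw [Finset.mul_sum, Finset.mul_sum]
    exact Finset.sum_congr rfl fun l _ => by ring
  rw [hfin]
  ring

lemma ham_flip {N : ℕ} (J : Matrix (Fin N) (Fin N) ℝ) (hsym : J.IsSymm)
    (hdiag : ∀ i, J i i = 0) (τ : Fin N → Bool) (i : Fin N) :
    Ham J (Function.update τ i (!τ i))
      = Ham J τ - 2 * spin (τ i) * ∑ k, J i k * spin (τ k) := by
  unfold Ham
  have hspin : ∀ k, spin (Function.update τ i (!τ i) k)
      = if k = i then -spin (τ i) else spin (τ k) := by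
    intro k; by_cases hk : k = i
    · subst hk; simp [spin_not]
    · simp [Function.update_of_ne hk, hk]
  simp_rw [hspin]
  rw [quad_update J hsym hdiag (fun k => spin (τ k)) i]
  ring

lemma J_eq_zero {N : ℕ} (J : Matrix (Fin N) (Fin N) ℝ) (hsym : J.IsSymm)
    (hdiag : ∀ i, J i i = 0) (h : ∀ τ, Ham J τ = 0) : J = 0 := by
  have hrow : ∀ (τ : Fin N → Bool) (i : Fin N), ∑ k, J i k * spin (τ k) = 0 := by
    intro τ i
    have h1 := ham_flip J hsym hdiag τ i
    rw [h τ, h (Function.update τ i (!τ i))] at h1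
    have h2 : spin (τ i) * ∑ k, J i k * spin (τ k) = 0 := by linarith
    exact (mul_eq_zero.mp h2).resolve_left (spin_ne_zero (τ i))
  ext i j
  by_cases hij : i = j
  · subst hij; simp [hdiag]
  · have h1 := hrow (fun _ => true) i
    have h2 := hrow (Function.update (fun _ => true) j false) i
    have key : ∀ k : Fin N, J i k * spin ((fun _ => true) k)
        - J i k * spin (Function.update (fun _ => true) j false k)
        = if k = j then 2 * J i j else 0 := by
      intro k; by_cases hk : k = j
      · subst hk; simp [spin]; ring
      · simp [Function.update_of_ne hk, hk]
    have h3 : (∑ k, J i k * spin ((fun _ => true) k))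
        - ∑ k, J i k * spin (Function.update (fun _ => true) j false k) = 2 * J i j := by
      rw [← Finset.sum_sub_distrib]
      simp_rw [key]
      rw [Finset.sum_ite_eq' Finset.univ j (fun _ => 2 * J i j)]
      simp
    rw [h1, h2] at h3
    have : J i j = 0 := by linarith
    simpa using this

lemma spin_sq (b : Bool) : spin b * spin b = 1 := by cases b <;> norm_num [spin]
lemma abs_spin (b : Bool) : |spin b| = 1 := by cases b <;> norm_num [spin]
-- quadratic form bound
lemma quad_abs {N : ℕ} (J : Matrix (Fin N) (Fin N) ℝ)
    (hnorm : ‖Matrix.toEuclideanCLM (𝕜 := ℝ) J‖ ≤ 1) (τ : Fin N → Bool) :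
    |∑ i, ∑ j, J i j * spin (τ i) * spin (τ j)| ≤ N := by
  set x : EuclideanSpace ℝ (Fin N) := (WithLp.equiv 2 _).symm (fun k => spin (τ k)) with hxdef
  have hx : ∀ k, x k = spin (τ k) := fun k => rfl
  have hnx : ‖x‖ ^ 2 = N := by
    rw [EuclideanSpace.norm_eq, Real.sq_sqrt (by positivity)]
    simp only [hx, Real.norm_eq_abs, abs_spin, one_pow]
    simp
  have happ : ∀ i, (Matrix.toEuclideanCLM (𝕜 := ℝ) J x) i = ∑ j, J i j * spin (τ j) := by
    intro i
    have := Matrix.toEuclideanCLM_toLp (𝕜 := ℝ) J (fun k => spin (τ k))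
    rw [hxdef]
    erw [this]
    simp [Matrix.toLin'_apply, Matrix.mulVec, dotProduct]
  have hinner : (inner ℝ x ((Matrix.toEuclideanCLM (𝕜 := ℝ) J) x) : ℝ)
      = ∑ i, ∑ j, J i j * spin (τ i) * spin (τ j) := by
    rw [PiLp.inner_apply]
    simp only [RCLike.inner_apply, starRingEnd_apply, star_trivial, happ, hx]
    refine Finset.sum_congr rfl fun i _ => ?_
    rw [Finset.sum_mul]
    exact Finset.sum_congr rfl fun j _ => by ring
  rw [← hinner]
  calc |(inner ℝ x ((Matrix.toEuclideanCLM (𝕜 := ℝ) J) x) : ℝ)|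
      ≤ ‖x‖ * ‖(Matrix.toEuclideanCLM (𝕜 := ℝ) J) x‖ := abs_real_inner_le_norm _ _
    _ ≤ ‖x‖ * (‖Matrix.toEuclideanCLM (𝕜 := ℝ) J‖ * ‖x‖) := by
        exact mul_le_mul_of_nonneg_left ((Matrix.toEuclideanCLM (𝕜 := ℝ) J).le_opNorm x)
          (norm_nonneg x)
    _ ≤ ‖x‖ * (1 * ‖x‖) := by
        have := mul_le_mul_of_nonneg_right hnorm (norm_nonneg x)
        exact mul_le_mul_of_nonneg_left (by linarith) (norm_nonneg x)
    _ = ‖x‖ ^ 2 := by ring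
    _ = N := hnx

lemma sum_spin_pair {N : ℕ} {i j : Fin N} (hij : i ≠ j) :
    ∑ τ : Fin N → Bool, spin (τ i) * spin (τ j) = 0 := by
  classical
  apply Finset.sum_ninvolution (fun τ => Function.update τ i (!τ i))
  · intro τ
    simp only [Function.update_apply, hij.symm, if_false, if_pos rfl, spin_not]
    have : (if i = i then spin (!τ i) else spin (τ i)) = -spin (τ i) := by simp [spin_not]
    ring_nf
    simp [spin_not]
    ring
  · intro τ h
    intro hc
    have : Function.update τ i (!τ i) i = τ i := by rw [hc]
    simp at this
  · intro τ; exact Finset.mem_univ _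
  · intro τ
    funext k
    by_cases hk : k = i
    · subst hk; simp [Function.update_apply]
    · simp [Function.update_apply, hk]

lemma sum_Ham {N : ℕ} (J : Matrix (Fin N) (Fin N) ℝ) (hdiag : ∀ i, J i i = 0) :
    ∑ τ : Fin N → Bool, Ham J τ = 0 := by
  classical
  unfold Ham
  rw [← Finset.mul_sum]
  rw [Finset.sum_comm]
  have : ∀ i : Fin N, ∑ τ : Fin N → Bool, ∑ j, J i j * spin (τ i) * spin (τ j) = 0 := by
    intro i
    rw [Finset.sum_comm]
    apply Finset.sum_eq_zero
    intro j _
    by_cases hij : i = j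
    · subst hij
      apply Finset.sum_eq_zero; intro τ _; rw [hdiag]; ring
    · have : ∑ τ : Fin N → Bool, J i j * spin (τ i) * spin (τ j)
          = J i j * ∑ τ : Fin N → Bool, spin (τ i) * spin (τ j) := by
        rw [Finset.mul_sum]; exact Finset.sum_congr rfl fun τ _ => by ring
      rw [this, sum_spin_pair hij, mul_zero]
  rw [Finset.sum_eq_zero fun i _ => this i, mul_zero]


/-- Lemma 2.5 of Chatterjee: for `J ≠ 0` symmetric with zero diagonal and `‖J‖ ≤ 1`,
`P_β(N⁻¹ H(σ) ≤ ψ(β)/(4β)) ≤ 8β²/(N ψ(β)³)` for every `β > 0`. -/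
theorem gibbs_energy_lower_tail {N : ℕ} (hN : 0 < N) (J : Matrix (Fin N) (Fin N) ℝ)
    (hsym : J.IsSymm) (hdiag : ∀ i, J i i = 0) (hJ : J ≠ 0)
    (hnorm : ‖Matrix.toEuclideanCLM (𝕜 := ℝ) J‖ ≤ 1) (β : ℝ) (hβ : 0 < β) :
    (∑ τ, if (N : ℝ)⁻¹ * Ham J τ ≤ logPart J β / (4 * β) then gibbs J β τ else 0) ≤
      8 * β ^ 2 / (N * logPart J β ^ 3) := by
  classical
  have hNR : (0:ℝ) < N := by exact_mod_cast hN
  have hcard : Fintype.card (Fin N → Bool) = 2 ^ N := by simp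
  have h2N : (0:ℝ) < (2:ℝ) ^ (-(N:ℤ)) := by positivity
  have hone : ((2:ℝ) ^ N) * (2:ℝ) ^ (-(N:ℤ)) = 1 := by
    rw [zpow_neg, zpow_natCast]
    exact mul_inv_cancel₀ (by positivity)
  set S := ∑ τ : Fin N → Bool, Real.exp (β * Ham J τ) with hSdef
  -- existence of a configuration with nonzero energy
  obtain ⟨τ0, hτ0⟩ : ∃ τ0, Ham J τ0 ≠ 0 := by
    by_contra h
    push_neg at h
    exact hJ (J_eq_zero J hsym hdiag h)
  -- S > 2 ^ N
  have hsum1 : ∑ τ : Fin N → Bool, (β * Ham J τ + 1) = (2:ℝ) ^ N := by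
    rw [Finset.sum_add_distrib, ← Finset.mul_sum, sum_Ham J hdiag, mul_zero, zero_add,
      Finset.sum_const, Finset.card_univ, hcard]
    norm_num
  have hSgt : (2:ℝ) ^ N < S := by
    rw [← hsum1]
    exact Finset.sum_lt_sum (fun τ _ => Real.add_one_le_exp _)
      ⟨τ0, Finset.mem_univ _, Real.add_one_lt_exp (mul_ne_zero hβ.ne' hτ0)⟩
  have hZgt : 1 < (2:ℝ) ^ (-(N:ℤ)) * S := by
    calc (1:ℝ) = (2:ℝ) ^ (-(N:ℤ)) * (2:ℝ) ^ N := by rw [mul_comm] at hone; rw [hone]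
    _ < (2:ℝ) ^ (-(N:ℤ)) * S := by exact (mul_lt_mul_iff_right₀ h2N).mpr hSgt
  have hψpos : 0 < logPart J β := by
    unfold logPart
    exact mul_pos (by positivity) (Real.log_pos hZgt)
  -- upper bound on logPart
  have hHam : ∀ τ, Ham J τ ≤ (N:ℝ) / 2 := by
    intro τ
    have h1 := quad_abs J hnorm τ
    have h2 := (abs_le.mp h1).2
    unfold Ham
    linarith
  have hSle : S ≤ (2:ℝ) ^ N * Real.exp (β * ((N:ℝ) / 2)) := by
    calc S ≤ ∑ _τ : Fin N → Bool, Real.exp (β * ((N:ℝ) / 2)) :=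
        Finset.sum_le_sum fun τ _ =>
          Real.exp_le_exp.mpr (mul_le_mul_of_nonneg_left (hHam τ) hβ.le)
    _ = (2:ℝ) ^ N * Real.exp (β * ((N:ℝ) / 2)) := by
        rw [Finset.sum_const, Finset.card_univ, hcard, nsmul_eq_mul]
        push_cast
        ring
  have hψle : logPart J β ≤ β / 2 := by
    unfold logPart
    rw [← hSdef]
    have hZle : (2:ℝ) ^ (-(N:ℤ)) * S ≤ Real.exp (β * ((N:ℝ) / 2)) := by
      calc (2:ℝ) ^ (-(N:ℤ)) * S ≤ (2:ℝ) ^ (-(N:ℤ)) * ((2:ℝ) ^ N * Real.exp (β * ((N:ℝ) / 2))) :=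
          (mul_le_mul_iff_right₀ h2N).mpr hSle
      _ = Real.exp (β * ((N:ℝ) / 2)) := by rw [← mul_assoc, mul_comm ((2:ℝ) ^ (-(N:ℤ))), hone, one_mul]
    have hlog : Real.log ((2:ℝ) ^ (-(N:ℤ)) * S) ≤ β * ((N:ℝ) / 2) := by
      rw [Real.log_le_iff_le_exp (by linarith)]
      exact hZle
    calc (N:ℝ)⁻¹ * Real.log ((2:ℝ) ^ (-(N:ℤ)) * S) ≤ (N:ℝ)⁻¹ * (β * ((N:ℝ) / 2)) :=
        mul_le_mul_of_nonneg_left hlog (by positivity)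
    _ = β / 2 := by field_simp
  set ψ := logPart J β with hψdef
  -- per-configuration bound
  have hterm : ∀ τ ∈ (Finset.univ : Finset (Fin N → Bool)),
      (if (N : ℝ)⁻¹ * Ham J τ ≤ ψ / (4 * β) then gibbs J β τ else 0)
        ≤ (2:ℝ) ^ (-(N:ℤ)) * Real.exp (-(3 / 4 * ((N:ℝ) * ψ))) := by
    intro τ _
    split_ifs with hc
    · unfold gibbs
      apply mul_le_mul_of_nonneg_left _ h2N.le
      apply Real.exp_le_exp.mpr
      have hH : Ham J τ ≤ (N:ℝ) * (ψ / (4 * β)) := by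
        have h := mul_le_mul_of_nonneg_left hc hNR.le
        rwa [← mul_assoc, mul_inv_cancel₀ hNR.ne', one_mul] at h
      have hbH : β * Ham J τ ≤ (N:ℝ) * ψ / 4 := by
        calc β * Ham J τ ≤ β * ((N:ℝ) * (ψ / (4 * β))) := mul_le_mul_of_nonneg_left hH hβ.le
        _ = (N:ℝ) * ψ / 4 := by field_simp
      linarith
    · positivity
  have hx : 0 < 3 / 4 * ((N:ℝ) * ψ) := by positivity
  calc (∑ τ, if (N : ℝ)⁻¹ * Ham J τ ≤ ψ / (4 * β) then gibbs J β τ else 0)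
      ≤ ∑ _τ : Fin N → Bool, (2:ℝ) ^ (-(N:ℤ)) * Real.exp (-(3 / 4 * ((N:ℝ) * ψ))) :=
        Finset.sum_le_sum hterm
    _ = Real.exp (-(3 / 4 * ((N:ℝ) * ψ))) := by
        rw [Finset.sum_const, Finset.card_univ, hcard, nsmul_eq_mul]
        push_cast
        rw [← mul_assoc, hone, one_mul]
    _ ≤ (3 / 4 * ((N:ℝ) * ψ))⁻¹ := by
        rw [Real.exp_neg]
        apply inv_anti₀ hx
        linarith [Real.add_one_le_exp (3 / 4 * ((N:ℝ) * ψ))]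
    _ ≤ 8 * β ^ 2 / ((N:ℝ) * ψ ^ 3) := by
        rw [inv_eq_one_div, div_le_div_iff₀ (by positivity) (by positivity)]
        have hsq : ψ ^ 2 ≤ β ^ 2 / 4 := by nlinarith
        nlinarith [mul_pos hNR hψpos, mul_le_mul_of_nonneg_left hsq (mul_pos hNR hψpos).le]
end
end

section
/- Let τ ∈ {-1,1}^N, J symmetric with zero diagonal and ‖J‖ ≤ 1, and c > 0 with N^{-1}H(τ) ≥ c. Define S_τ(x) = (1/N)∑ᵢ mᵢ(τ)(τᵢ − tanh(x·mᵢ(τ))) for x ≥ 0. Then for any β ≥ 0, |tanh(2β̂(τ)/c) − tanh(2β/c)| ≤ 8|S_τ(β)|/(3c⁵), where β̂(τ) = inf{x ≥ 0 : S_τ(x) = 0} (interpreting tanh(2·∞/c) = 1 if β̂(τ) = ∞). -/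
noncomputable section

namespace ChatterjeeAux
open Real Filter Topology

lemma hasDerivAt_tanh (x : ℝ) : HasDerivAt Real.tanh (1 / Real.cosh x ^ 2) x := by
  have h := (Real.hasDerivAt_sinh x).div (Real.hasDerivAt_cosh x) (Real.cosh_pos x).ne'
  have hf : (fun y => Real.sinh y / Real.cosh y) = Real.tanh :=
    funext fun y => (Real.tanh_eq_sinh_div_cosh y).symm
  rw [show Real.sinh / Real.cosh = fun y => Real.sinh y / Real.cosh y from rfl, hf] at h
  refine h.congr_deriv ?_
  have h2 := Real.cosh_sq_sub_sinh_sq x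
  have h3 := (Real.cosh_pos x).ne'
  rw [show Real.cosh x * Real.cosh x - Real.sinh x * Real.sinh x = 1 by nlinarith [h2]]

lemma tanh_strictMono : StrictMono Real.tanh := by
  apply strictMono_of_deriv_pos
  intro x
  rw [(hasDerivAt_tanh x).deriv]
  positivity

lemma tanh_lt_one (x : ℝ) : Real.tanh x < 1 := by
  rw [Real.tanh_eq_sinh_div_cosh, div_lt_one (Real.cosh_pos x)]
  have := Real.cosh_sub_sinh x
  nlinarith [Real.exp_pos (-x)]

lemma tanh_eq_one_sub (x : ℝ) : Real.tanh x = 1 - 2 / (Real.exp (2 * x) + 1) := by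
  have h1 : Real.exp (2 * x) = Real.exp x * Real.exp x := by
    rw [← Real.exp_add]; ring_nf
  have h2 : Real.exp x * Real.exp (-x) = 1 := by
    rw [← Real.exp_add]; simp
  have h3 := Real.exp_pos x
  have h4 := Real.exp_pos (-x)
  rw [Real.tanh_eq_sinh_div_cosh, Real.sinh_eq, Real.cosh_eq]
  rw [div_eq_iff (by positivity)]
  field_simp [h1]
  have h5 : Real.exp x * Real.exp (-x) * Real.exp x = 1 * Real.exp x := by rw [h2]
  rw [show x * 2 = 2 * x by ring, h1]
  nlinarith [h2, h5]

lemma tendsto_tanh_atTop : Tendsto Real.tanh atTop (𝓝 1) := by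
  have : Real.tanh = fun x => 1 - 2 / (Real.exp (2 * x) + 1) := funext tanh_eq_one_sub
  rw [this]
  have h1 : Tendsto (fun x : ℝ => Real.exp (2 * x) + 1) atTop atTop :=
    (Real.tendsto_exp_atTop.comp (tendsto_id.const_mul_atTop two_pos)).atTop_add tendsto_const_nhds
  have h2 : Tendsto (fun x : ℝ => 2 / (Real.exp (2 * x) + 1)) atTop (𝓝 0) := by
    simpa [div_eq_mul_inv] using h1.inv_tendsto_atTop.const_mul (2 : ℝ)
  simpa using tendsto_const_nhds.sub h2

lemma continuous_tanh : Continuous Real.tanh :=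
  (Differentiable.continuous fun x => (hasDerivAt_tanh x).differentiableAt)

end ChatterjeeAux

open Real Filter Topology Finset

set_option maxHeartbeats 2000000 in
/-- Lemma 2.2 of Chatterjee: if `N⁻¹ H(τ) ≥ c > 0` then for any `β ≥ 0`,
`|tanh(2β̂(τ)/c) − tanh(2β/c)| ≤ 8|S_τ(β)|/(3c⁵)`, where
`S_τ(x) = (1/N) ∑ᵢ mᵢ(τ)(τᵢ − tanh(x mᵢ(τ)))` with `mᵢ(τ) = ∑ⱼ J_{ij} τⱼ`,
`H(τ) = (1/2) ∑ᵢ mᵢ(τ) τᵢ`, and `β̂(τ) = inf {x ≥ 0 : S_τ(x) = 0}`; when the set of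
zeros is empty (`β̂(τ) = ∞`) we interpret `tanh(2β̂(τ)/c) = 1`. -/
theorem pseudolikelihood_inversion {N : ℕ} (hN : 0 < N)
    (J : Matrix (Fin N) (Fin N) ℝ) (hsym : J.IsSymm) (hdiag : ∀ i, J i i = 0)
    (hnorm : ‖Matrix.toEuclideanCLM (𝕜 := ℝ) J‖ ≤ 1)
    (τ : Fin N → ℝ) (hτ : ∀ i, τ i = 1 ∨ τ i = -1)
    (m : Fin N → ℝ) (hm : ∀ i, m i = ∑ j, J i j * τ j)
    (S : ℝ → ℝ) (hS : ∀ x, S x = (1 / (N : ℝ)) * ∑ i, m i * (τ i - Real.tanh (x * m i)))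
    (c : ℝ) (hc : 0 < c)
    (hH : c ≤ (N : ℝ)⁻¹ * ((1 / 2) * ∑ i, m i * τ i))
    (β : ℝ) (hβ : 0 ≤ β) :
    ((∃ x : ℝ, 0 ≤ x ∧ S x = 0) →
      |Real.tanh (2 * sInf {x : ℝ | 0 ≤ x ∧ S x = 0} / c) - Real.tanh (2 * β / c)| ≤
        8 * |S β| / (3 * c ^ 5)) ∧
    ((¬ ∃ x : ℝ, 0 ≤ x ∧ S x = 0) →
      |1 - Real.tanh (2 * β / c)| ≤ 8 * |S β| / (3 * c ^ 5)) := by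
  classical
  set n : ℝ := (N : ℝ) with hn_def
  have hn : 0 < n := by rw [hn_def]; exact_mod_cast hN
  have hτabs : ∀ i, |τ i| = 1 := fun i => by rcases hτ i with h | h <;> simp [h]
  have hτsq : ∀ i, τ i ^ 2 = 1 := fun i => by rcases hτ i with h | h <;> simp [h]
  -- Step A : ∑ m i ^ 2 ≤ n
  have hm2 : ∑ i, m i ^ 2 ≤ n := by
    set v : EuclideanSpace ℝ (Fin N) := (WithLp.equiv 2 (Fin N → ℝ)).symm τ with hv
    have hvnorm : ‖v‖ ^ 2 = n := by
      rw [EuclideanSpace.norm_eq, Real.sq_sqrt (by positivity)]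
      have h1 : ∀ i, ‖v i‖ ^ 2 = 1 := by
        intro i
        have : v i = τ i := rfl
        rw [this, Real.norm_eq_abs, sq_abs, hτsq i]
      rw [Finset.sum_congr rfl (fun i _ => h1 i)]
      simp [hn_def]
    have happ : Matrix.toEuclideanCLM (𝕜 := ℝ) J v =
        (WithLp.equiv 2 (Fin N → ℝ)).symm (Matrix.toLin' J τ) := by
      rw [hv]; rfl
    have hJv : ‖Matrix.toEuclideanCLM (𝕜 := ℝ) J v‖ ^ 2 = ∑ i, m i ^ 2 := by
      rw [EuclideanSpace.norm_eq, Real.sq_sqrt (by positivity)]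
      apply Finset.sum_congr rfl
      intro i _
      have hcoord : (Matrix.toEuclideanCLM (𝕜 := ℝ) J v) i = m i := by
        rw [happ]
        have : ((WithLp.equiv 2 (Fin N → ℝ)).symm (Matrix.toLin' J τ)) i
            = Matrix.toLin' J τ i := rfl
        rw [this, Matrix.toLin'_apply, hm i]
        try simp [Matrix.mulVec, dotProduct]
      rw [hcoord, Real.norm_eq_abs, sq_abs]
    have hle : ‖Matrix.toEuclideanCLM (𝕜 := ℝ) J v‖ ≤ ‖v‖ := by
      calc ‖Matrix.toEuclideanCLM (𝕜 := ℝ) J v‖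
          ≤ ‖Matrix.toEuclideanCLM (𝕜 := ℝ) J‖ * ‖v‖ := ContinuousLinearMap.le_opNorm _ _
        _ ≤ 1 * ‖v‖ := by gcongr
        _ = ‖v‖ := one_mul _
    calc ∑ i, m i ^ 2 = ‖Matrix.toEuclideanCLM (𝕜 := ℝ) J v‖ ^ 2 := hJv.symm
      _ ≤ ‖v‖ ^ 2 := pow_le_pow_left₀ (norm_nonneg _) hle 2
      _ = n := hvnorm
  -- basic sums
  have hsum1 : 2 * c * n ≤ ∑ i, m i * τ i := by
    have h2 : c * n ≤ (1 / 2) * ∑ i, m i * τ i := by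
      rw [show (N : ℝ)⁻¹ * ((1 / 2) * ∑ i, m i * τ i)
          = ((1 / 2) * ∑ i, m i * τ i) / n from by rw [hn_def]; ring] at hH
      rw [le_div_iff₀ hn] at hH
      linarith
    linarith
  have hmabs : ∑ i, m i * τ i ≤ ∑ i, |m i| := by
    apply Finset.sum_le_sum
    intro i _
    calc m i * τ i ≤ |m i * τ i| := le_abs_self _
      _ = |m i| := by rw [abs_mul, hτabs i, mul_one]
  have habs_le : ∑ i, |m i| ≤ n := by
    have h1 := sq_sum_le_card_mul_sum_sq (s := Finset.univ) (f := fun i : Fin N => |m i|)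
    have h2 : ∑ i, |m i| ^ 2 = ∑ i, m i ^ 2 := by
      apply Finset.sum_congr rfl; intro i _; rw [sq_abs]
    have h3 : ((Finset.univ : Finset (Fin N)).card : ℝ) = n := by simp [hn_def]
    have h4 : (0:ℝ) ≤ ∑ i, |m i| := Finset.sum_nonneg fun i _ => abs_nonneg _
    have h5 : (∑ i, |m i|) ^ 2 ≤ n * n := by
      calc (∑ i, |m i|) ^ 2 ≤ (Finset.univ : Finset (Fin N)).card * ∑ i, |m i| ^ 2 := by
            exact_mod_cast h1
        _ = n * ∑ i, m i ^ 2 := by rw [h3, h2]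
        _ ≤ n * n := by gcongr
    nlinarith
  have hc12 : 2 * c ≤ 1 := by nlinarith [hsum1, hmabs, habs_le]
  -- Step C : key derivative bound
  have key : ∀ x : ℝ, 0 ≤ x →
      (9/4) * c^2 / Real.cosh (2*x/c) ^ 2 ≤ (1/n) * ∑ i, m i ^ 2 / Real.cosh (x * m i) ^ 2 := by
    intro x hx
    set B := Finset.univ.filter (fun i : Fin N => |m i| ≤ 2/c) with hB
    have hcomp : ∑ i ∈ Bᶜ, |m i| ≤ (c/2) * ∑ i ∈ Bᶜ, m i ^ 2 := by
      rw [Finset.mul_sum]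
      apply Finset.sum_le_sum
      intro i hi
      have hi' : 2/c < |m i| := by
        simp only [hB, Finset.mem_compl, Finset.mem_filter, Finset.mem_univ, true_and,
          not_le] at hi
        exact hi
      have habs := abs_nonneg (m i)
      have hsq : m i ^ 2 = |m i| ^ 2 := (sq_abs _).symm
      rw [hsq]
      have h5 : 2 ≤ c * |m i| := by
        rw [div_lt_iff₀ hc] at hi'
        nlinarith
      nlinarith [mul_nonneg habs (sub_nonneg.mpr h5)]
    have hcompm2 : ∑ i ∈ Bᶜ, m i ^ 2 ≤ n := by
      calc ∑ i ∈ Bᶜ, m i ^ 2 ≤ ∑ i, m i ^ 2 :=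
            Finset.sum_le_sum_of_subset_of_nonneg (Finset.subset_univ _)
              (fun i _ _ => by positivity)
        _ ≤ n := hm2
    have hsplit : ∑ i ∈ B, |m i| + ∑ i ∈ Bᶜ, |m i| = ∑ i, |m i| :=
      Finset.sum_add_sum_compl B _
    have hBlow : (3/2) * c * n ≤ ∑ i ∈ B, |m i| := by
      have h9 : (c/2) * (∑ i ∈ Bᶜ, m i ^ 2) ≤ (c/2) * n := by gcongr
      nlinarith [hsum1, hmabs]
    have hBsq : (9/4) * c^2 * n ≤ ∑ i ∈ B, m i ^ 2 := by
      have h1 := sq_sum_le_card_mul_sum_sq (s := B) (f := fun i : Fin N => |m i|)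
      have h2 : ∑ i ∈ B, |m i| ^ 2 = ∑ i ∈ B, m i ^ 2 := by
        apply Finset.sum_congr rfl; intro i _; rw [sq_abs]
      have h3 : (B.card : ℝ) ≤ n := by
        have := Finset.card_le_univ B
        rw [hn_def]
        calc (B.card : ℝ) ≤ (Fintype.card (Fin N) : ℝ) := by exact_mod_cast this
          _ = (N : ℝ) := by simp
      have h4 : ((∑ i ∈ B, |m i|) : ℝ) ^ 2 ≤ n * ∑ i ∈ B, m i ^ 2 := by
        calc ((∑ i ∈ B, |m i|) : ℝ) ^ 2 ≤ (B.card : ℝ) * ∑ i ∈ B, |m i| ^ 2 := by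
              exact_mod_cast h1
          _ = (B.card : ℝ) * ∑ i ∈ B, m i ^ 2 := by rw [h2]
          _ ≤ n * ∑ i ∈ B, m i ^ 2 := by
              apply mul_le_mul_of_nonneg_right h3
              exact Finset.sum_nonneg fun i _ => by positivity
      nlinarith [hBlow, mul_pos hc hn]
    have hcoshpos : (0:ℝ) < Real.cosh (2*x/c) ^ 2 := by positivity
    have hterm : ∀ i ∈ B, m i ^ 2 / Real.cosh (2*x/c) ^ 2 ≤ m i ^ 2 / Real.cosh (x * m i) ^ 2 := by
      intro i hi
      have hi' : |m i| ≤ 2/c := by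
        simp only [hB, Finset.mem_filter, Finset.mem_univ, true_and] at hi
        exact hi
      have hcc : Real.cosh (x * m i) ≤ Real.cosh (2*x/c) := by
        rw [Real.cosh_le_cosh]
        rw [abs_mul, abs_of_nonneg hx]
        have h2 : |2*x/c| = x * (2/c) := by
          rw [abs_of_nonneg (by positivity)]; ring
        rw [h2]
        exact mul_le_mul_of_nonneg_left hi' hx
      apply div_le_div_of_nonneg_left (by positivity) (by positivity)
      have := Real.cosh_pos (x * m i)
      nlinarith
    calc (9/4) * c^2 / Real.cosh (2*x/c) ^ 2
        = (1/n) * ((9/4) * c^2 * n / Real.cosh (2*x/c) ^ 2) := by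
          field_simp
      _ ≤ (1/n) * ((∑ i ∈ B, m i ^ 2) / Real.cosh (2*x/c) ^ 2) := by
          gcongr
      _ = (1/n) * (∑ i ∈ B, m i ^ 2 / Real.cosh (2*x/c) ^ 2) := by
          rw [Finset.sum_div]
      _ ≤ (1/n) * (∑ i ∈ B, m i ^ 2 / Real.cosh (x * m i) ^ 2) := by
          apply mul_le_mul_of_nonneg_left (Finset.sum_le_sum hterm) (by positivity)
      _ ≤ (1/n) * ∑ i, m i ^ 2 / Real.cosh (x * m i) ^ 2 := by
          apply mul_le_mul_of_nonneg_left _ (by positivity)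
          apply Finset.sum_le_sum_of_subset_of_nonneg (Finset.subset_univ _)
          intro i _ _; positivity
  -- derivatives
  have hSd : ∀ x : ℝ, HasDerivAt S ((1/n) * ∑ i, -(m i ^ 2 / Real.cosh (x * m i) ^ 2)) x := by
    intro x
    have hfun : S = fun y => (1/n) * ∑ i, m i * (τ i - Real.tanh (y * m i)) := funext hS
    rw [hfun]
    apply HasDerivAt.const_mul
    apply HasDerivAt.fun_sum
    intro i _
    have h1 : HasDerivAt (fun y : ℝ => y * m i) (m i) x := by
      simpa using (hasDerivAt_id x).mul_const (m i)
    have h2 : HasDerivAt (fun y : ℝ => Real.tanh (y * m i))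
        (1 / Real.cosh (x * m i) ^ 2 * m i) x :=
      by have := (ChatterjeeAux.hasDerivAt_tanh (x * m i)).comp x h1; exact this
    have h3 : HasDerivAt (fun y : ℝ => m i * (τ i - Real.tanh (y * m i)))
        (m i * (0 - 1 / Real.cosh (x * m i) ^ 2 * m i)) x :=
      ((hasDerivAt_const x (τ i)).sub h2).const_mul (m i)
    refine h3.congr_deriv ?_
    have := (Real.cosh_pos (x * m i)).ne'
    ring
  have htd : ∀ x : ℝ, HasDerivAt (fun y => Real.tanh (2*y/c))
      ((2/c) / Real.cosh (2*x/c) ^ 2) x := by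
    intro x
    have h1 : HasDerivAt (fun y : ℝ => 2 * y / c) (2/c) x := by
      simpa using (((hasDerivAt_id x).const_mul (2:ℝ)).div_const c)
    have h2 := (ChatterjeeAux.hasDerivAt_tanh (2*x/c)).comp x h1
    have h3 : (2/c) / Real.cosh (2*x/c) ^ 2 = 1 / Real.cosh (2*x/c) ^ 2 * (2/c) := by ring
    rw [h3]; exact h2
  have hTd : ∀ x : ℝ, HasDerivAt (fun y => S y + (9/8) * c^3 * Real.tanh (2*y/c))
      ((1/n) * ∑ i, -(m i ^ 2 / Real.cosh (x * m i) ^ 2)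
        + (9/8) * c^3 * ((2/c) / Real.cosh (2*x/c) ^ 2)) x := by
    intro x
    exact (hSd x).add (((htd x)).const_mul ((9/8) * c^3))
  have hTanti : AntitoneOn (fun y => S y + (9/8) * c^3 * Real.tanh (2*y/c)) (Set.Ici 0) := by
    apply antitoneOn_of_deriv_nonpos (convex_Ici 0)
    · exact (Differentiable.continuous fun x => (hTd x).differentiableAt).continuousOn
    · exact fun x _ => (hTd x).differentiableAt.differentiableWithinAt
    · intro x hx
      rw [interior_Ici] at hx
      rw [(hTd x).deriv]
      have hk := key x (le_of_lt hx)
      have he1 : (1/n) * ∑ i, -(m i ^ 2 / Real.cosh (x * m i) ^ 2)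
          = -((1/n) * ∑ i, m i ^ 2 / Real.cosh (x * m i) ^ 2) := by
        rw [Finset.sum_neg_distrib]; ring
      have he2 : (9/8) * c^3 * ((2/c) / Real.cosh (2*x/c) ^ 2)
          = (9/4) * c^2 / Real.cosh (2*x/c) ^ 2 := by
        field_simp; ring
      rw [he1, he2]
      linarith
  have hKey : ∀ a b : ℝ, 0 ≤ a → a ≤ b →
      (9/8) * c^3 * (Real.tanh (2*b/c) - Real.tanh (2*a/c)) ≤ S a - S b := by
    intro a b ha hab
    have h := hTanti (Set.mem_Ici.mpr ha) (Set.mem_Ici.mpr (ha.trans hab)) hab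
    dsimp only at h
    linarith
  have hScont : Continuous S := by
    have hfun : S = fun y => (1/n) * ∑ i, m i * (τ i - Real.tanh (y * m i)) := funext hS
    rw [hfun]
    apply Continuous.mul continuous_const
    apply continuous_finset_sum
    intro i _
    exact Continuous.mul continuous_const
      (Continuous.sub continuous_const
        (ChatterjeeAux.continuous_tanh.comp (continuous_id.mul continuous_const)))
  have hS0 : 2 * c ≤ S 0 := by
    rw [hS 0]
    have : ∀ i, m i * (τ i - Real.tanh (0 * m i)) = m i * τ i := by
      intro i; simp [Real.tanh_zero]
    rw [Finset.sum_congr rfl (fun i _ => this i)]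
    rw [show (1 / (N:ℝ)) * ∑ i, m i * τ i = (∑ i, m i * τ i) / n from by rw [hn_def]; ring,
      le_div_iff₀ hn]
    linarith [hsum1]
  have htanhmono : ∀ a b : ℝ, a ≤ b → Real.tanh (2*a/c) ≤ Real.tanh (2*b/c) := by
    intro a b hab
    apply ChatterjeeAux.tanh_strictMono.monotone
    gcongr
  have hdivgoal : ∀ Δ SB : ℝ, 0 ≤ Δ → 0 ≤ SB → (9/8) * c^3 * Δ ≤ SB →
      Δ ≤ 8 * SB / (3 * c^5) := by
    intro Δ SB hΔ hSB h
    rw [le_div_iff₀ (by positivity)]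
    have hcsq : c^2 ≤ 1 := by nlinarith
    have h1 : 3 * c^5 ≤ 9 * c^3 := by
      nlinarith [mul_le_mul_of_nonneg_left hcsq (pow_pos hc 3).le]
    calc Δ * (3 * c^5) ≤ Δ * (9 * c^3) := by gcongr
      _ = 8 * ((9/8) * c^3 * Δ) := by ring
      _ ≤ 8 * SB := by linarith
  constructor
  · -- zero exists
    intro hex
    set Z := {x : ℝ | 0 ≤ x ∧ S x = 0} with hZ
    have hZne : Z.Nonempty := hex
    have hZbdd : BddBelow Z := ⟨0, fun x hx => hx.1⟩
    have hZclosed : IsClosed Z := by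
      have : Z = Set.Ici 0 ∩ S ⁻¹' {0} := by
        ext x; simp [hZ, Set.mem_Ici]
      rw [this]
      exact isClosed_Ici.inter (isClosed_singleton.preimage hScont)
    obtain ⟨hb0, hbS⟩ := hZclosed.csInf_mem hZne hZbdd
    set b := sInf Z with hb
    rcases le_total β b with hle | hle
    · have h := hKey β b hβ hle
      rw [hbS, sub_zero] at h
      have habs : |Real.tanh (2*b/c) - Real.tanh (2*β/c)|
          = Real.tanh (2*b/c) - Real.tanh (2*β/c) :=
        abs_of_nonneg (sub_nonneg.mpr (htanhmono β b hle))
      rw [habs]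
      exact hdivgoal _ _ (by linarith [htanhmono β b hle]) (abs_nonneg _)
        (h.trans (le_abs_self _))
    · have h := hKey b β hb0 hle
      rw [hbS, zero_sub] at h
      have habs : |Real.tanh (2*b/c) - Real.tanh (2*β/c)|
          = Real.tanh (2*β/c) - Real.tanh (2*b/c) := by
        rw [abs_sub_comm]
        exact abs_of_nonneg (sub_nonneg.mpr (htanhmono b β hle))
      rw [habs]
      exact hdivgoal _ _ (by linarith [htanhmono b β hle]) (abs_nonneg _)
        (h.trans (neg_le_abs _))
  · -- no zero
    intro hnex
    have hSpos : ∀ x, 0 ≤ x → 0 ≤ S x := by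
      intro x hx
      by_contra hneg
      push_neg at hneg
      have h0m : (0:ℝ) ∈ Set.Icc (S x) (S 0) := ⟨hneg.le, by linarith⟩
      obtain ⟨y, hy, hyS⟩ := intermediate_value_Icc' hx hScont.continuousOn h0m
      exact hnex ⟨y, hy.1, hyS⟩
    have hinner : Tendsto (fun x : ℝ => 2*x/c) atTop atTop :=
      (tendsto_id.const_mul_atTop two_pos).atTop_div_const hc
    have hlim1 : Tendsto (fun x => (9/8) * c^3 * (Real.tanh (2*x/c) - Real.tanh (2*β/c))) atTop
        (𝓝 ((9/8) * c^3 * (1 - Real.tanh (2*β/c)))) := by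
      apply Tendsto.const_mul
      exact ((ChatterjeeAux.tendsto_tanh_atTop.comp hinner).sub tendsto_const_nhds)
    have hev : ∀ᶠ x in atTop,
        (9/8) * c^3 * (Real.tanh (2*x/c) - Real.tanh (2*β/c)) ≤ S β := by
      filter_upwards [eventually_ge_atTop β] with x hx
      have h := hKey β x hβ hx
      have h2 := hSpos x (hβ.trans hx)
      linarith
    have hle2 : (9/8) * c^3 * (1 - Real.tanh (2*β/c)) ≤ S β := le_of_tendsto hlim1 hev
    have h1 : |1 - Real.tanh (2*β/c)| = 1 - Real.tanh (2*β/c) :=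
      abs_of_nonneg (by linarith [ChatterjeeAux.tanh_lt_one (2*β/c)])
    have h2 : |S β| = S β := abs_of_nonneg (hSpos β hβ)
    rw [h1, h2]
    exact hdivgoal _ _ (by linarith [ChatterjeeAux.tanh_lt_one (2*β/c)]) (hSpos β hβ) hle2
end
end
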